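/- Then c(m,n) ≤ K^m / ( (1−κ)^n · (m−n)! · n! ) for all m, n ∈ ℕ with n ≤ m. (The comparison estimate in the proof of Proposition 5.6 (thm:frobeniusz) of the paper, bounding the Frobenius coefficients of a solution at the Fuchsian singularity z = 0.) -/

import Mathlib

/-- The comparison estimate in the proof of Proposition 5.6 (thm:frobeniusz) of the paper:
if the nonnegative coefficients `c(m,n)` (vanishing for `n > m`, with `c(0,0) ≤ 1`, extended by
zero to negative indices) satisfy
`c(m,n) ≤ K (c(m−1,n) + c(m−1,n−1)) / (m − n κ)` for `(m,n) ≠ (0,0)`, `n ≤ m`, where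
`0 < κ < 1` and `K ≥ 0`, then `c(m,n) ≤ K^m / ((1−κ)^n (m−n)! n!)` for all `n ≤ m`. -/
theorem frobenius_coefficient_bound (κ K : ℝ) (hκ0 : 0 < κ) (hκ1 : κ < 1) (hK : 0 ≤ K)
    (c : ℕ → ℕ → ℝ) (hpos : ∀ m n : ℕ, 0 ≤ c m n) (h00 : c 0 0 ≤ 1)
    (hvanish : ∀ m n : ℕ, m < n → c m n = 0)
    (hrec : ∀ m n : ℕ, (m, n) ≠ (0, 0) → n ≤ m →
      c m n ≤ K * ((if m = 0 then 0 else c (m - 1) n) +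
        (if m = 0 ∨ n = 0 then 0 else c (m - 1) (n - 1))) / ((m : ℝ) - n * κ)) :
    ∀ m n : ℕ, n ≤ m →
      c m n ≤ K ^ m / ((1 - κ) ^ n * (m - n).factorial * n.factorial) := by
  have h1κ : (0:ℝ) < 1 - κ := by linarith
  intro m
  induction m with
  | zero =>
    intro n hn
    interval_cases n
    simpa using h00
  | succ m ih =>
    intro n hn
    have hden : (0:ℝ) < ((m:ℝ)+1) - (n:ℝ) * κ := by
      have h1 : (n:ℝ) ≤ (m:ℝ)+1 := by exact_mod_cast hn
      have h0 : (0:ℝ) ≤ (n:ℝ) := Nat.cast_nonneg n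
      nlinarith
    set D : ℝ := (1 - κ) ^ n * ((m+1-n).factorial : ℝ) * (n.factorial : ℝ) with hD
    have hDpos : 0 < D := by positivity
    have hA : c m n ≤ (((m:ℝ)+1) - (n:ℝ)) * (K^m / D) := by
      rcases Nat.lt_or_ge m n with h | h
      · have hne : n = m+1 := le_antisymm hn h
        subst hne
        rw [hvanish m (m+1) (by omega)]
        have : ((m:ℝ)+1) - ((m:ℕ)+1:ℝ) = 0 := by push_cast; ring
        push_cast
        nlinarith [div_nonneg (pow_nonneg hK m) hDpos.le]
      · have hih := ih n h
        have hsub : m+1-n = (m-n)+1 := by omega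
        have hfact : ((m+1-n).factorial : ℝ) = (((m:ℝ)+1) - (n:ℝ)) * ((m-n).factorial : ℝ) := by
          rw [hsub, Nat.factorial_succ]
          have : ((m-n:ℕ):ℝ) = (m:ℝ) - (n:ℝ) := by
            push_cast [Nat.cast_sub h]; ring
          push_cast [this]; ring
        rw [hD, hfact]
        have hcoef : (0:ℝ) < ((m:ℝ)+1) - (n:ℝ) := by
          have : (n:ℝ) ≤ (m:ℝ) := by exact_mod_cast h
          linarith
        rw [show (((m:ℝ)+1) - (n:ℝ)) * (K^m / ((1-κ)^n * ((((m:ℝ)+1) - (n:ℝ)) * ((m-n).factorial:ℝ)) * (n.factorial:ℝ))) = K^m / ((1-κ)^n * ((m-n).factorial:ℝ) * (n.factorial:ℝ)) from by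
          field_simp]
        exact hih
    have hB : (if n = 0 then (0:ℝ) else c m (n-1)) ≤ (1-κ) * (n:ℝ) * (K^m / D) := by
      rcases Nat.eq_zero_or_pos n with h0 | h0
      · subst h0; simp
      · rw [if_neg (by omega)]
        have hih := ih (n-1) (by omega)
        have hsub : m - (n-1) = m+1-n := by omega
        have hn1 : n = (n-1)+1 := by omega
        have hpow : (1-κ)^n = (1-κ)^(n-1) * (1-κ) := by
          conv_lhs => rw [hn1]
          rw [pow_succ]
        have hfact : (n.factorial : ℝ) = (n:ℝ) * ((n-1).factorial : ℝ) := by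
          conv_lhs => rw [hn1]
          rw [Nat.factorial_succ]
          push_cast [Nat.cast_sub h0]
          ring
        rw [hsub] at hih
        have hnpos : (0:ℝ) < (n:ℝ) := by exact_mod_cast h0
        rw [hD, hpow, hfact]
        rw [show (1-κ) * (n:ℝ) * (K^m / ((1-κ)^(n-1) * (1-κ) * ((m+1-n).factorial:ℝ) * ((n:ℝ) * ((n-1).factorial:ℝ)))) = K^m / ((1-κ)^(n-1) * ((m+1-n).factorial:ℝ) * ((n-1).factorial:ℝ)) from by
          field_simp]
        exact hih
    have hrec' := hrec (m+1) n (by simp) hn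
    rw [if_neg (by omega)] at hrec'
    rw [show ((if m+1 = 0 ∨ n = 0 then (0:ℝ) else c (m+1-1) (n-1))) = (if n = 0 then (0:ℝ) else c m (n-1)) from by
      by_cases h : n = 0 <;> simp [h]] at hrec'
    have hcast : ((m+1:ℕ):ℝ) = (m:ℝ)+1 := by push_cast; ring
    rw [show (m+1-1) = m from rfl, hcast] at hrec'
    have hS : c m n + (if n = 0 then (0:ℝ) else c m (n-1)) ≤ (((m:ℝ)+1) - (n:ℝ)*κ) * (K^m / D) := by
      have := add_le_add hA hB
      calc c m n + (if n = 0 then (0:ℝ) else c m (n-1))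
          ≤ (((m:ℝ)+1) - (n:ℝ)) * (K^m / D) + (1-κ) * (n:ℝ) * (K^m / D) := this
        _ = (((m:ℝ)+1) - (n:ℝ)*κ) * (K^m / D) := by ring
    calc c (m+1) n ≤ K * (c m n + (if n = 0 then (0:ℝ) else c m (n-1))) / (((m:ℝ)+1) - (n:ℝ)*κ) := hrec'
      _ ≤ K * ((((m:ℝ)+1) - (n:ℝ)*κ) * (K^m / D)) / (((m:ℝ)+1) - (n:ℝ)*κ) := by
          gcongr
      _ = K^(m+1) / D := by
          field_simp
          ring
      _ = K^(m+1) / ((1-κ)^n * ((m+1-n).factorial:ℝ) * (n.factorial:ℝ)) := by rw [hD]
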